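/- arXiv:2605.00709 — 2 statements merged into one kernel-verified Lean document; each statement's English description precedes it below -/
import Mathlib

section
/- Let (Ω, F, P) be a probability space, G ⊆ F a sub-σ-algebra, and s an integrable random variable. Define a = E[s | A] − E[s], d = E[s | B] − E[s], v = E[s | A ∨ B] − E[s | A] − E[s | B] + E[s], and e = s − E[s | A ∨ B], where A, B ⊆ F are sub-σ-algebras. Then s = a + d + v + e + E[s], E[e | A ∨ B] = 0, and E[v | A] = 0 and E[v | B] = 0 whenever A and B are independent. -/
open MeasureTheory ProbabilityTheory

/-- Hoeffding-type decomposition of an integrable (square-integrable) random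
variable `s` with respect to two sub-σ-algebras `A` and `B`:
with `a = E[s|A] − E[s]`, `d = E[s|B] − E[s]`,
`v = E[s|A ⊔ B] − E[s|A] − E[s|B] + E[s]`, and `e = s − E[s|A ⊔ B]`, we have
`s = a + d + v + e + E[s]`, `E[e | A ⊔ B] = 0` a.s., and if `A` and `B` are
independent then `E[v|A] = 0` and `E[v|B] = 0` a.s. -/
theorem hoeffding_decomposition
    {Ω : Type*} {mΩ : MeasurableSpace Ω} (μ : Measure Ω) [IsProbabilityMeasure μ]
    (A B : MeasurableSpace Ω) (hA : A ≤ mΩ) (hB : B ≤ mΩ)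
    (s : Ω → ℝ) (hs : MemLp s 2 μ) :
    (∀ ω, s ω =
        ((μ[s|A]) ω - ∫ x, s x ∂μ) + ((μ[s|B]) ω - ∫ x, s x ∂μ)
        + ((μ[s|A ⊔ B]) ω - (μ[s|A]) ω - (μ[s|B]) ω + ∫ x, s x ∂μ)
        + (s ω - (μ[s|A ⊔ B]) ω) + ∫ x, s x ∂μ)
    ∧ μ[(fun ω => s ω - (μ[s|A ⊔ B]) ω)|A ⊔ B] =ᵐ[μ] 0
    ∧ (ProbabilityTheory.Indep A B μ →
        μ[(fun ω => (μ[s|A ⊔ B]) ω - (μ[s|A]) ω - (μ[s|B]) ω + ∫ x, s x ∂μ)|A]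
            =ᵐ[μ] 0
        ∧ μ[(fun ω => (μ[s|A ⊔ B]) ω - (μ[s|A]) ω - (μ[s|B]) ω + ∫ x, s x ∂μ)|B]
            =ᵐ[μ] 0) := by
  have hAB : A ⊔ B ≤ mΩ := sup_le hA hB
  have hsi : Integrable s μ := hs.integrable one_le_two
  refine ⟨fun ω => by ring, ?_, ?_⟩
  · have h1 : μ[(fun ω => s ω - (μ[s|A ⊔ B]) ω)|A ⊔ B]
        =ᵐ[μ] μ[s|A ⊔ B] - μ[μ[s|A ⊔ B]|A ⊔ B] :=
      condExp_sub hsi integrable_condExp _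
    have h2 : μ[μ[s|A ⊔ B]|A ⊔ B] = μ[s|A ⊔ B] :=
      condExp_of_stronglyMeasurable hAB stronglyMeasurable_condExp integrable_condExp
    filter_upwards [h1] with ω hω
    simp [hω, h2]
  · intro hindep
    have key : ∀ (C : MeasurableSpace Ω) (hC : C ≤ mΩ)
        (h1 : μ[μ[s|A ⊔ B]|C] =ᵐ[μ] μ[s|C])
        (h2 : μ[μ[s|A]|C] + μ[μ[s|B]|C] =ᵐ[μ] μ[s|C] + fun _ => ∫ x, s x ∂μ),
        μ[(fun ω => (μ[s|A ⊔ B]) ω - (μ[s|A]) ω - (μ[s|B]) ω + ∫ x, s x ∂μ)|C]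
          =ᵐ[μ] 0 := by
      intro C hC h1 h2
      have hsum : μ[((μ[s|A ⊔ B]) - (μ[s|A]) - (μ[s|B]) + fun _ => ∫ x, s x ∂μ)|C]
          =ᵐ[μ] μ[μ[s|A ⊔ B]|C] - μ[μ[s|A]|C] - μ[μ[s|B]|C]
            + μ[(fun _ => ∫ x, s x ∂μ)|C] := by
        refine (condExp_add ((integrable_condExp.sub integrable_condExp).sub
          integrable_condExp) (integrable_const _) _).trans ?_
        refine Filter.EventuallyEq.add ?_ Filter.EventuallyEq.rfl
        refine (condExp_sub (integrable_condExp.sub integrable_condExp)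
          integrable_condExp _).trans ?_
        exact Filter.EventuallyEq.sub
          (condExp_sub integrable_condExp integrable_condExp _) Filter.EventuallyEq.rfl
      have hconst : μ[(fun _ => ∫ x, s x ∂μ)|C] = fun _ => ∫ x, s x ∂μ :=
        condExp_const hC _
      filter_upwards [hsum, h1, h2] with ω hω ha hb
      have : ((μ[s|A ⊔ B]) - (μ[s|A]) - (μ[s|B]) + fun _ => ∫ x, s x ∂μ)
          = (fun ω => (μ[s|A ⊔ B]) ω - (μ[s|A]) ω - (μ[s|B]) ω + ∫ x, s x ∂μ) := rfl
      rw [← this]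
      simp only [Pi.add_apply, Pi.sub_apply, hconst] at hω ha hb ⊢
      rw [hω, ha]
      have hb' : (μ[μ[s|A]|C]) ω + (μ[μ[s|B]|C]) ω = (μ[s|C]) ω + ∫ x, s x ∂μ := hb
      simp only [Pi.zero_apply]
      linarith
    constructor
    · refine key A hA (condExp_condExp_of_le le_sup_left hAB) ?_
      have h3 : μ[μ[s|A]|A] = μ[s|A] :=
        condExp_of_stronglyMeasurable hA stronglyMeasurable_condExp integrable_condExp
      have h4 : μ[μ[s|B]|A] =ᵐ[μ] fun _ => ∫ x, (μ[s|B]) x ∂μ :=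
        condExp_indep_eq hB hA stronglyMeasurable_condExp hindep.symm
      rw [integral_condExp hB] at h4
      filter_upwards [h4] with ω hω
      simp [h3, hω]
    · refine key B hB (condExp_condExp_of_le le_sup_right hAB) ?_
      have h3 : μ[μ[s|B]|B] = μ[s|B] :=
        condExp_of_stronglyMeasurable hB stronglyMeasurable_condExp integrable_condExp
      have h4 : μ[μ[s|A]|B] =ᵐ[μ] fun _ => ∫ x, (μ[s|A]) x ∂μ :=
        condExp_indep_eq hA hB stronglyMeasurable_condExp hindep
      rw [integral_condExp hA] at h4
      filter_upwards [h4] with ω hω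
      simp only [Pi.add_apply, h3, hω]
      ring
end

section
/- With the same array {ε_{it}} as above, the probability of the event A_{NT} = {ε_{it} = 0 for all i ≤ N, t ≤ T} equals (1 − 1/(NT))^{NT}, and this converges to e^{−1} as NT → ∞. Consequently, for two such arrays with parameters m₁ ≠ m₂, the total variation distance between the induced joint laws satisfies limsup ‖P_{m₁,NT} − P_{m₂,NT}‖_TV ≤ 1 − e^{−1} < 1. -/
open Filter Topology MeasureTheory ProbabilityTheory

/-- Total variation distance `sup_A |P(A) − Q(A)|` over measurable sets. -/
noncomputable def tvDist {Ω : Type*} [MeasurableSpace Ω] (P Q : Measure Ω) : ℝ :=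
  ⨆ s : {s : Set Ω // MeasurableSet s}, |(P s).toReal - (Q s).toReal|

lemma tvDist_le_of_eq_atom {Ω X : Type*} [MeasurableSpace Ω] [MeasurableSpace X]
    (μ : Measure Ω) [IsProbabilityMeasure μ] (f g : Ω → X)
    (hf : Measurable f) (hg : Measurable g) (x : X)
    (hx : MeasurableSet ({x} : Set X))
    (h1 : μ (g ⁻¹' {x}) = μ (f ⁻¹' {x})) :
    tvDist (μ.map f) (μ.map g) ≤ 1 - (μ (f ⁻¹' {x})).toReal := by
  haveI : Nonempty {s : Set X // MeasurableSet s} := ⟨⟨∅, MeasurableSet.empty⟩⟩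
  apply ciSup_le
  rintro ⟨s, hs⟩
  rw [Measure.map_apply hf hs, Measure.map_apply hg hs]
  set α := (μ (f ⁻¹' {x})).toReal with hα
  have hα1 : α ≤ 1 := by
    have := ENNReal.toReal_mono ENNReal.one_ne_top (prob_le_one (μ := μ) (s := f ⁻¹' {x}))
    simpa using this
  have hα0 : 0 ≤ α := ENNReal.toReal_nonneg
  by_cases hxs : x ∈ s
  · have hfa : α ≤ (μ (f ⁻¹' s)).toReal :=
      ENNReal.toReal_mono (measure_ne_top _ _)
        (measure_mono (Set.preimage_mono (Set.singleton_subset_iff.2 hxs)))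
    have hga : α ≤ (μ (g ⁻¹' s)).toReal := by
      rw [hα, ← h1]
      exact ENNReal.toReal_mono (measure_ne_top _ _)
        (measure_mono (Set.preimage_mono (Set.singleton_subset_iff.2 hxs)))
    have hfu : (μ (f ⁻¹' s)).toReal ≤ 1 := by
      have := ENNReal.toReal_mono ENNReal.one_ne_top (prob_le_one (μ := μ) (s := f ⁻¹' s))
      simpa using this
    have hgu : (μ (g ⁻¹' s)).toReal ≤ 1 := by
      have := ENNReal.toReal_mono ENNReal.one_ne_top (prob_le_one (μ := μ) (s := g ⁻¹' s))
      simpa using this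
    rw [abs_sub_le_iff]
    constructor <;> linarith
  · have hcompl : (1 - μ (f ⁻¹' {x})).toReal = 1 - α := by
      rw [ENNReal.toReal_sub_of_le prob_le_one ENNReal.one_ne_top, ENNReal.toReal_one]
    have hfu : (μ (f ⁻¹' s)).toReal ≤ 1 - α := by
      rw [← hcompl, ← prob_compl_eq_one_sub (hf hx)]
      refine ENNReal.toReal_mono (measure_ne_top _ _) (measure_mono ?_)
      intro ω hω hmem
      exact hxs (by simpa using hmem ▸ hω)
    have hgu : (μ (g ⁻¹' s)).toReal ≤ 1 - α := by
      rw [← hcompl, ← h1, ← prob_compl_eq_one_sub (hg hx)]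
      refine ENNReal.toReal_mono (measure_ne_top _ _) (measure_mono ?_)
      intro ω hω hmem
      exact hxs (by simpa using hmem ▸ hω)
    have hf0 : (0:ℝ) ≤ (μ (f ⁻¹' s)).toReal := ENNReal.toReal_nonneg
    have hg0 : (0:ℝ) ≤ (μ (g ⁻¹' s)).toReal := ENNReal.toReal_nonneg
    rw [abs_sub_le_iff]
    constructor <;> linarith

lemma allzero_prob {n : ℕ} (hn : 1 ≤ n) {Ω : Type*} [MeasurableSpace Ω]
    (μ : Measure Ω) (ε : Fin n → Ω → ℝ)
    (hind : iIndepFun ε μ)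
    (hlaw : ∀ i, μ {ω | ε i ω = 0} = ENNReal.ofReal (1 - 1 / (n : ℝ))) :
    μ {ω | ∀ i, ε i ω = 0} = ENNReal.ofReal ((1 - 1 / (n : ℝ)) ^ n) := by
  have hset : {ω | ∀ i, ε i ω = 0} = ⋂ i, ε i ⁻¹' {(0:ℝ)} := by
    ext ω; simp [Set.mem_iInter]
  have hx : (0:ℝ) ≤ 1 - 1 / (n : ℝ) := by
    have hn' : (1:ℝ) ≤ (n:ℝ) := by exact_mod_cast hn
    have : 1 / (n:ℝ) ≤ 1 := by
      rw [div_le_one (by linarith)]; exact hn'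
    linarith
  rw [hset, hind.meas_iInter (fun i => ⟨{(0:ℝ)}, measurableSet_singleton 0, rfl⟩)]
  simp only [Set.preimage, Set.mem_singleton_iff]
  calc (∏ i : Fin n, μ {ω | ε i ω = 0})
      = ∏ i : Fin n, ENNReal.ofReal (1 - 1 / (n : ℝ)) := by
        exact Finset.prod_congr rfl fun i _ => hlaw i
    _ = ENNReal.ofReal (1 - 1 / (n : ℝ)) ^ n := by simp
    _ = ENNReal.ofReal ((1 - 1 / (n : ℝ)) ^ n) := (ENNReal.ofReal_pow hx n).symm

/-- For the sparse i.i.d. arrays `ε₁` (parameter `m₁`) and `ε₂` (parameter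
`m₂`): the probability that all entries vanish is `(1 − 1/n)^n → e^{−1}`, and
consequently the total variation distance between the induced joint laws
satisfies `limsup ‖P_{m₁,n} − P_{m₂,n}‖_TV ≤ 1 − e^{−1} < 1`. -/
theorem all_zero_event_and_tv_bound
    (m₁ m₂ : ℝ) (hm₁ : 0 < m₁) (hm₂ : 0 < m₂) (hne : m₁ ≠ m₂)
    (Ω : ℕ → Type*) (mΩ : ∀ n, MeasurableSpace (Ω n))
    (μ : ∀ n, Measure (Ω n)) (hμ : ∀ n, IsProbabilityMeasure (μ n))
    (ε₁ ε₂ : ∀ n, Fin n → Ω n → ℝ)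
    (hmeas₁ : ∀ n i, Measurable (ε₁ n i)) (hmeas₂ : ∀ n i, Measurable (ε₂ n i))
    (hindep₁ : ∀ n, iIndepFun (ε₁ n) (μ n))
    (hindep₂ : ∀ n, iIndepFun (ε₂ n) (μ n))
    (hlaw₁ : ∀ n, 1 ≤ n → ∀ i,
      μ n {ω | ε₁ n i ω = m₁} = ENNReal.ofReal (1 / (2 * (n : ℝ)))
      ∧ μ n {ω | ε₁ n i ω = -m₁} = ENNReal.ofReal (1 / (2 * (n : ℝ)))
      ∧ μ n {ω | ε₁ n i ω = 0} = ENNReal.ofReal (1 - 1 / (n : ℝ)))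
    (hlaw₂ : ∀ n, 1 ≤ n → ∀ i,
      μ n {ω | ε₂ n i ω = m₂} = ENNReal.ofReal (1 / (2 * (n : ℝ)))
      ∧ μ n {ω | ε₂ n i ω = -m₂} = ENNReal.ofReal (1 / (2 * (n : ℝ)))
      ∧ μ n {ω | ε₂ n i ω = 0} = ENNReal.ofReal (1 - 1 / (n : ℝ)))
    (P Q : ∀ n : ℕ, Measure (Fin n → ℝ))
    (hP : ∀ n, P n = Measure.map (fun ω i => ε₁ n i ω) (μ n))
    (hQ : ∀ n, Q n = Measure.map (fun ω i => ε₂ n i ω) (μ n)) :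
    (∀ n, 1 ≤ n →
      μ n {ω | ∀ i, ε₁ n i ω = 0} = ENNReal.ofReal ((1 - 1 / (n : ℝ)) ^ n))
    ∧ Tendsto (fun n : ℕ => (1 - 1 / (n : ℝ)) ^ n) atTop (𝓝 (Real.exp (-1)))
    ∧ Filter.limsup (fun n => tvDist (P n) (Q n)) atTop ≤ 1 - Real.exp (-1)
    ∧ 1 - Real.exp (-1) < 1 := by
  have hall₁ : ∀ n, 1 ≤ n →
      μ n {ω | ∀ i, ε₁ n i ω = 0} = ENNReal.ofReal ((1 - 1 / (n : ℝ)) ^ n) :=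
    fun n hn => allzero_prob hn (μ n) (ε₁ n) (hindep₁ n) (fun i => (hlaw₁ n hn i).2.2)
  have hall₂ : ∀ n, 1 ≤ n →
      μ n {ω | ∀ i, ε₂ n i ω = 0} = ENNReal.ofReal ((1 - 1 / (n : ℝ)) ^ n) :=
    fun n hn => allzero_prob hn (μ n) (ε₂ n) (hindep₂ n) (fun i => (hlaw₂ n hn i).2.2)
  have htend : Tendsto (fun n : ℕ => (1 - 1 / (n : ℝ)) ^ n) atTop (𝓝 (Real.exp (-1))) := by
    have := Real.tendsto_one_add_div_pow_exp (-1)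
    simpa [sub_eq_add_neg, neg_div] using this
  refine ⟨hall₁, htend, ?_, ?_⟩
  · -- limsup bound
    have hbound : ∀ n : ℕ, 1 ≤ n → tvDist (P n) (Q n) ≤ 1 - (1 - 1 / (n : ℝ)) ^ n := by
      intro n hn
      haveI := hμ n
      have hpre₁ : (fun ω i => ε₁ n i ω) ⁻¹' {(0 : Fin n → ℝ)} = {ω | ∀ i, ε₁ n i ω = 0} := by
        ext ω; simp [funext_iff]
      have hpre₂ : (fun ω i => ε₂ n i ω) ⁻¹' {(0 : Fin n → ℝ)} = {ω | ∀ i, ε₂ n i ω = 0} := by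
        ext ω; simp [funext_iff]
      have hx : (0:ℝ) ≤ 1 - 1 / (n : ℝ) := by
        have hn' : (1:ℝ) ≤ (n:ℝ) := by exact_mod_cast hn
        have : 1 / (n:ℝ) ≤ 1 := by rw [div_le_one (by linarith)]; exact hn'
        linarith
      have key := tvDist_le_of_eq_atom (μ n)
        (fun ω i => ε₁ n i ω) (fun ω i => ε₂ n i ω)
        (measurable_pi_lambda _ (fun i => hmeas₁ n i))
        (measurable_pi_lambda _ (fun i => hmeas₂ n i))
        (0 : Fin n → ℝ) (measurableSet_singleton _)
        (by rw [hpre₁, hpre₂, hall₁ n hn, hall₂ n hn])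
      rw [hP n, hQ n]
      refine key.trans ?_
      rw [hpre₁, hall₁ n hn, ENNReal.toReal_ofReal (pow_nonneg hx n)]
    have h394 : (fun n => tvDist (P n) (Q n)) ≤ᶠ[atTop]
        (fun n : ℕ => 1 - (1 - 1 / (n : ℝ)) ^ n) :=
      eventually_atTop.2 ⟨1, fun n hn => hbound n hn⟩
    have hu_tendsto : Tendsto (fun n : ℕ => 1 - (1 - 1 / (n : ℝ)) ^ n) atTop
        (𝓝 (1 - Real.exp (-1))) := tendsto_const_nhds.sub htend
    have hnn : ∀ᶠ n in atTop, (0:ℝ) ≤ tvDist (P n) (Q n) := by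
      filter_upwards with n
      exact Real.iSup_nonneg fun s => abs_nonneg _
    have hcob : IsCoboundedUnder (· ≤ ·) atTop (fun n => tvDist (P n) (Q n)) :=
      isCoboundedUnder_le_of_eventually_le atTop hnn
    have hbdd : IsBoundedUnder (· ≤ ·) atTop (fun n : ℕ => 1 - (1 - 1 / (n : ℝ)) ^ n) :=
      hu_tendsto.isBoundedUnder_le
    calc Filter.limsup (fun n => tvDist (P n) (Q n)) atTop
        ≤ Filter.limsup (fun n : ℕ => 1 - (1 - 1 / (n : ℝ)) ^ n) atTop :=
          limsup_le_limsup h394 hcob hbdd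
      _ = 1 - Real.exp (-1) := hu_tendsto.limsup_eq
  · have h := Real.exp_pos (-1)
    linarith
end
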